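/- Let aᵢⱼ ≥ 0 (1 ≤ i ≠ j ≤ N) be weights with associated Laplacian matrix L ∈ ℝ^{N×N}, and let d₁, …, d_N ≥ 0 with D = diag(d₁, …, d_N). Consider the weighted digraph on nodes {0, 1, …, N} with an edge from node j to node i (1 ≤ i, j ≤ N) whenever aᵢⱼ > 0 and an edge from node 0 to node i whenever dᵢ > 0. If this digraph contains a directed spanning tree rooted at node 0, then every eigenvalue of L + D over ℂ has positive real part; in particular L + D is a nonsingular M-matrix. -/

import Mathlib

open Matrix

private lemma charpoly_eval_eq_det' {n : Type*} [Fintype n] [DecidableEq n]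
    (M : Matrix n n ℂ) (μ : ℂ) :
    M.charpoly.eval μ = (Matrix.diagonal (fun _ => μ) - M).det := by
  rw [Matrix.charpoly, ← Polynomial.coe_evalRingHom, RingHom.map_det]
  congr 1
  ext i j
  by_cases h : i = j
  · subst h; simp [charmatrix_apply_eq]
  · simp [charmatrix_apply_ne _ _ _ h, Matrix.diagonal_apply_ne _ h]

/-- If the weighted digraph on `{0,1,…,N}` (follower-follower
edges from `j` to `i` when `a i j > 0`, leader edges from `0` to `i` when
`d i > 0`) contains a directed spanning tree rooted at the leader `0`, then
every complex eigenvalue of `L + D` has positive real part; in particular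
`L + D` is a nonsingular M-matrix (its off-diagonal entries are nonpositive). -/
theorem laplacian_plus_pinning_nonsingular_M_matrix
    (N : ℕ)
    (a : Fin N → Fin N → ℝ)
    (ha : ∀ i j, i ≠ j → 0 ≤ a i j)
    (L : Matrix (Fin N) (Fin N) ℝ)
    (hLdiag : ∀ i, L i i = ∑ j ∈ Finset.univ.erase i, a i j)
    (hLoff : ∀ i j, i ≠ j → L i j = -(a i j))
    (d : Fin N → ℝ) (hd : ∀ i, 0 ≤ d i)
    (htree : ∀ i : Fin N,
      Relation.ReflTransGen
        (fun u v : Option (Fin N) =>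
          match u, v with
          | none, some i => 0 < d i
          | some j, some i => 0 < a i j
          | _, none => False)
        none (some i)) :
    (∀ μ : ℂ, ((L + Matrix.diagonal d).map Complex.ofReal).charpoly.IsRoot μ →
        0 < μ.re) ∧
    (∀ i j, i ≠ j → (L + Matrix.diagonal d) i j ≤ 0) := by
  constructor
  · intro μ hroot
    by_contra hre
    push_neg at hre
    set M : Matrix (Fin N) (Fin N) ℂ := (L + Matrix.diagonal d).map Complex.ofReal with hM
    have hdet : (Matrix.diagonal (fun _ => μ) - M).det = 0 := by
      rw [← charpoly_eval_eq_det']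
      exact hroot
    obtain ⟨v, hv0, hveq⟩ := Matrix.exists_mulVec_eq_zero_iff.mpr hdet
    have heq : ∀ i, μ * v i = ∑ j, M i j * v j := by
      intro i
      have h0 := congrFun hveq i
      rw [Matrix.sub_mulVec] at h0
      have h1 : (Matrix.diagonal (fun _ => μ)).mulVec v i = μ * v i :=
        Matrix.mulVec_diagonal _ _ _
      have h2 : M.mulVec v i = ∑ j, M i j * v j := rfl
      have := sub_eq_zero.mp h0
      rw [h1, h2] at this
      exact this
    obtain ⟨k, hk⟩ := Function.ne_iff.mp hv0
    obtain ⟨i₀, -, hmax⟩ := Finset.exists_max_image Finset.univ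
      (fun i => ‖v i‖) ⟨k, Finset.mem_univ k⟩
    set m := ‖v i₀‖ with hmdef
    have hm : 0 < m := lt_of_lt_of_le (norm_pos_iff.mpr hk)
      (hmax k (Finset.mem_univ k))
    -- key step
    have key : ∀ i, ‖v i‖ = m →
        d i = 0 ∧ ∀ j, j ≠ i → 0 < a i j → ‖v j‖ = m := by
      intro i him
      have hMii : M i i = ((L i i + d i : ℝ) : ℂ) := by
        simp [hM, Matrix.add_apply, Matrix.diagonal_apply_eq]
      have hMij : ∀ j, j ≠ i → M i j = ((-(a i j) : ℝ) : ℂ) := by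
        intro j hj
        simp [hM, Matrix.add_apply, Matrix.diagonal_apply_ne d (Ne.symm hj),
          hLoff i j (Ne.symm hj)]
      have heq2 : (((L i i + d i : ℝ) : ℂ) - μ) * v i
          = ∑ j ∈ Finset.univ.erase i, ((a i j : ℝ) : ℂ) * v j := by
        have h0 := heq i
        rw [← Finset.add_sum_erase Finset.univ _ (Finset.mem_univ i), hMii] at h0
        have hsum : ∑ j ∈ Finset.univ.erase i, M i j * v j
            = -∑ j ∈ Finset.univ.erase i, ((a i j : ℝ) : ℂ) * v j := by
          rw [← Finset.sum_neg_distrib]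
          refine Finset.sum_congr rfl fun j hj => ?_
          rw [hMij j (Finset.ne_of_mem_erase hj)]
          push_cast
          ring
        rw [hsum] at h0
        linear_combination -h0
      -- upper bound for the sum of abs
      have hub : ∑ j ∈ Finset.univ.erase i, a i j * ‖v j‖ ≤ L i i * m := by
        rw [hLdiag i, Finset.sum_mul]
        refine Finset.sum_le_sum fun j hj => ?_
        exact mul_le_mul_of_nonneg_left (hmax j (Finset.mem_univ j))
          (ha i j (Ne.symm (Finset.ne_of_mem_erase hj)))
      -- lower bound
      have hlb : (L i i + d i - μ.re) * m
          ≤ ∑ j ∈ Finset.univ.erase i, a i j * ‖v j‖ := by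
        have h1 : (L i i + d i - μ.re) ≤ ‖((L i i + d i : ℝ) : ℂ) - μ‖ := by
          have := Complex.re_le_norm (((L i i + d i : ℝ) : ℂ) - μ)
          simpa using this
        have h2 : (L i i + d i - μ.re) * m
            ≤ ‖(((L i i + d i : ℝ) : ℂ) - μ) * v i‖ := by
          rw [norm_mul, him]
          exact mul_le_mul_of_nonneg_right h1 hm.le
        refine h2.trans ?_
        rw [heq2]
        refine (norm_sum_le _ _).trans ?_
        refine Finset.sum_le_sum fun j hj => ?_
        rw [norm_mul, Complex.norm_real, Real.norm_eq_abs,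
          abs_of_nonneg (ha i j (Ne.symm (Finset.ne_of_mem_erase hj)))]
      have hd0 : d i = 0 ∧ μ.re = 0 := by
        have := hlb.trans hub
        have hle : L i i + d i - μ.re ≤ L i i := le_of_mul_le_mul_right this hm
        constructor <;> nlinarith [hd i]
      refine ⟨hd0.1, fun j hj haij => ?_⟩
      -- equality in the sum
      have heqsum : ∑ j ∈ Finset.univ.erase i, a i j * ‖v j‖
          = ∑ j ∈ Finset.univ.erase i, a i j * m := by
        have hsm : ∑ j ∈ Finset.univ.erase i, a i j * m = L i i * m := by
          rw [hLdiag i, Finset.sum_mul]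
        rw [hsm]
        refine le_antisymm hub ?_
        have : (L i i + d i - μ.re) * m = L i i * m := by rw [hd0.1, hd0.2]; ring
        linarith [hlb]
      have hterm := (Finset.sum_eq_sum_iff_of_le
        (fun j hj => mul_le_mul_of_nonneg_left (hmax j (Finset.mem_univ j))
          (ha i j (Ne.symm (Finset.ne_of_mem_erase hj))))).mp heqsum
      have := hterm j (Finset.mem_erase.mpr ⟨hj, Finset.mem_univ j⟩)
      exact mul_left_cancel₀ (ne_of_gt haij) this
    -- reachability contradiction
    have hreach : ∀ u : Option (Fin N),
        Relation.ReflTransGen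
          (fun u v : Option (Fin N) =>
            match u, v with
            | none, some i => 0 < d i
            | some j, some i => 0 < a i j
            | _, none => False)
          none u →
        ∀ i : Fin N, u = some i → ‖v i‖ ≠ m := by
      intro u hu
      induction hu with
      | refl => intro i h; simp at h
      | @tail b c hab hbc ih =>
        intro i hci him
        subst hci
        obtain ⟨hdi, hstep⟩ := key i him
        cases b with
        | none =>
          have hdi' : 0 < d i := hbc
          linarith
        | some j =>
          have haij : 0 < a i j := hbc
          by_cases hji : j = i
          · exact ih i (by rw [hji]) him
          · exact ih j rfl (hstep j hji haij)
    exact hreach (some i₀) (htree i₀) i₀ rfl rfl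
  · intro i j hij
    have h1 : (L + Matrix.diagonal d) i j = L i j := by
      simp [Matrix.add_apply, Matrix.diagonal_apply_ne d hij]
    rw [h1, hLoff i j hij]
    linarith [ha i j hij]
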